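/- Let ḡ be a Lorentzian 3×3 real symmetric matrix, ḡ8 a positive-definite 8×8 real symmetric matrix, ω ∈ ℝ, and set W² := ω²·|ḡ|. If W² < 1, then M_Ω(ḡ, ḡ8, ω) = M_C(g, g8, c), where g := (1−W²)^(−2/3)·ḡ, g8 := (1−W²)^(1/3)·ḡ8 and c := ω·det ḡ/(1−W²). Thus when W² < 1 the trivector can be gauged away in favour of a 3-form. -/

import Mathlib

open Matrix
set_option maxRecDepth 4000

/-- The (g,C)-frame generalised metric: a 14×14 matrix in 3+3+8 block form. -/
noncomputable def MC (g : Matrix (Fin 3) (Fin 3) ℝ) (g8 : Matrix (Fin 8) (Fin 8) ℝ) (c : ℝ) :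
    Matrix ((Fin 3 ⊕ Fin 3) ⊕ Fin 8) ((Fin 3 ⊕ Fin 3) ⊕ Fin 8) ℝ :=
  |g.det * g8.det| ^ (-(1 : ℝ) / 2) •
    fromBlocks
      (fromBlocks ((1 + c ^ 2 / g.det) • g) ((c / g.det) • g) ((c / g.det) • g)
        ((1 / g.det) • g))
      0 0 g8

/-- The (ḡ,Ω)-frame generalised metric: a 14×14 matrix in 3+3+8 block form. -/
noncomputable def MOmega (g : Matrix (Fin 3) (Fin 3) ℝ) (g8 : Matrix (Fin 8) (Fin 8) ℝ)
    (ω : ℝ) : Matrix ((Fin 3 ⊕ Fin 3) ⊕ Fin 8) ((Fin 3 ⊕ Fin 3) ⊕ Fin 8) ℝ :=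
  |g.det * g8.det| ^ (-(1 : ℝ) / 2) •
    fromBlocks
      (fromBlocks g (ω • g) (ω • g) ((ω ^ 2 + 1 / g.det) • g))
      0 0 g8

/-- A 3×3 real symmetric (Hermitian) matrix is Lorentzian if it has exactly one negative
and two positive eigenvalues. -/
def Lorentzian3 (g : Matrix (Fin 3) (Fin 3) ℝ) : Prop :=
  ∃ hg : g.IsHermitian,
    {i | hg.eigenvalues i < 0}.ncard = 1 ∧ {i | 0 < hg.eigenvalues i}.ncard = 2

lemma det_neg_of_lor (g : Matrix (Fin 3) (Fin 3) ℝ) (hg : Lorentzian3 g) :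
    g.det < 0 := by
  obtain ⟨h, h1, h2⟩ := hg
  set f := h.eigenvalues with hf
  have hunion : {i | f i < 0} ∪ {i | 0 < f i} = Set.univ := by
    apply Set.eq_of_subset_of_ncard_le (Set.subset_univ _)
    rw [Set.ncard_union_eq (by
        rw [Set.disjoint_left]; intro i hi hi'
        have h1 : f i < 0 := hi
        have h2 : 0 < f i := hi'
        linarith)
      (Set.toFinite _) (Set.toFinite _), h1, h2, Set.ncard_univ]
    simp
  obtain ⟨i0, hi0⟩ := Set.ncard_eq_one.mp h1
  have hdet : g.det = ∏ i, f i := by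
    have := h.det_eq_prod_eigenvalues
    simpa using this
  rw [hdet, ← Finset.mul_prod_erase Finset.univ f (Finset.mem_univ i0)]
  have hneg : f i0 < 0 := by
    have : i0 ∈ {i | f i < 0} := by rw [hi0]; rfl
    exact this
  have hpos : ∀ i ∈ Finset.univ.erase i0, 0 < f i := by
    intro i hi
    have hne : i ≠ i0 := (Finset.mem_erase.mp hi).1
    have : i ∈ {i | f i < 0} ∪ {i | 0 < f i} := by rw [hunion]; trivial
    rcases this with hlt | hgt
    · exact absurd (by rw [hi0] at hlt; exact hlt) hne
    · exact hgt
  exact mul_neg_of_neg_of_pos hneg (Finset.prod_pos hpos)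

/-- For Lorentzian ḡ, positive-definite ḡ8, and W² := ω²·|ḡ| < 1 (where |ḡ| = −det ḡ),
the (ḡ,Ω)-frame generalised metric equals the (g,C)-frame one with
g = (1−W²)^(−2/3)·ḡ, g8 = (1−W²)^(1/3)·ḡ8 and c = ω·det ḡ/(1−W²). -/
theorem stmt_2 (gb : Matrix (Fin 3) (Fin 3) ℝ) (gb8 : Matrix (Fin 8) (Fin 8) ℝ)
    (hgb : Lorentzian3 gb) (hgb8 : gb8.PosDef) (ω : ℝ)
    (hW : ω ^ 2 * (-gb.det) < 1) :
    MOmega gb gb8 ω =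
      MC ((1 - ω ^ 2 * (-gb.det)) ^ (-(2 : ℝ) / 3) • gb)
        ((1 - ω ^ 2 * (-gb.det)) ^ ((1 : ℝ) / 3) • gb8)
        (ω * gb.det / (1 - ω ^ 2 * (-gb.det))) := by
  have hD : gb.det < 0 := det_neg_of_lor gb hgb
  rw [MOmega, MC]
  set D := gb.det with hDdef
  set s : ℝ := 1 - ω ^ 2 * (-D) with hs
  have hspos : 0 < s := by linarith
  have hsne : s ≠ 0 := ne_of_gt hspos
  have hDne : D ≠ 0 := ne_of_lt hD
  set t : ℝ := s ^ ((1 : ℝ) / 3) with htdef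
  have htpos : 0 < t := Real.rpow_pos_of_pos hspos _
  have htne : t ≠ 0 := ne_of_gt htpos
  have ht3 : t ^ 3 = s := by
    rw [htdef, ← Real.rpow_natCast (s ^ ((1:ℝ)/3)) 3, ← Real.rpow_mul hspos.le]
    norm_num
  have hA : s ^ (-(2 : ℝ) / 3) = (t ^ 2)⁻¹ := by
    rw [htdef, ← Real.rpow_natCast (s ^ ((1:ℝ)/3)) 2, ← Real.rpow_mul hspos.le,
      ← Real.rpow_neg hspos.le]
    norm_num
  have hdetg : ((s ^ (-(2 : ℝ) / 3)) • gb).det = (t ^ 2)⁻¹ ^ 3 * D := by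
    rw [hA]; simp [det_smul, ← hDdef]
  have hdetg8 : ((t : ℝ) • gb8).det = t ^ 8 * gb8.det := by
    simp [det_smul]
  rw [hdetg, hdetg8, hA]
  have habs : |(t ^ 2)⁻¹ ^ 3 * D * (t ^ 8 * gb8.det)|
      = t ^ 2 * |D * gb8.det| := by
    rw [show (t^2)⁻¹^3 * D * (t^8 * gb8.det)
      = t ^ 2 * (D * gb8.det) by field_simp, abs_mul (t^2),
      abs_of_pos (show (0:ℝ) < t^2 by positivity)]
  rw [habs]
  have h8 : gb8.det ≠ 0 := by
    intro h0
    obtain ⟨x, hx, hx0⟩ := (Matrix.exists_mulVec_eq_zero_iff).mpr h0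
    have hcon := (posDef_iff_dotProduct_mulVec.mp hgb8).2 hx
    rw [hx0] at hcon
    simp at hcon
  have hupos : 0 < |D * gb8.det| := abs_pos.mpr (mul_ne_zero hDne h8)
  have hscal : (t ^ 2 * |D * gb8.det|) ^ (-(1:ℝ)/2)
      = t⁻¹ * |D * gb8.det| ^ (-(1:ℝ)/2) := by
    rw [Real.mul_rpow (by positivity) hupos.le]
    congr 1
    rw [← Real.rpow_natCast t 2, ← Real.rpow_mul htpos.le]
    norm_num
    exact Real.rpow_neg_one t
  rw [hscal]
  set v : ℝ := |D * gb8.det| ^ (-(1:ℝ)/2) with hv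
  have hvne : v ≠ 0 := ne_of_gt (hv ▸ Real.rpow_pos_of_pos hupos (-(1:ℝ)/2))
  have key : t ^ 3 = 1 + ω ^ 2 * D := by rw [ht3, hs]; ring
  rw [show s = t ^ 3 from ht3.symm]
  have ht3ne : (t:ℝ) ^ 3 ≠ 0 := pow_ne_zero _ htne
  simp only [fromBlocks_smul, smul_smul, smul_zero]
  rw [fromBlocks_inj, fromBlocks_inj]
  refine ⟨⟨?_, ?_, ?_, ?_⟩, rfl, rfl, ?_⟩
  · congr 1
    field_simp [hvne]
    linear_combination key
  · congr 1
    field_simp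
  · congr 1
    field_simp
  · congr 1
    field_simp [hvne]
    linear_combination (-1) * key
  · congr 1
    field_simp
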